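/- Let $A$ be a commutative associative unital $\mathbb{C}$-algebra, and in $U(\mathfrak{gl}_N \otimes A)$ define $T_k(b_1,\dots,b_k) = \sum_{i_1,\dots,i_k} E_{i_1 i_2}(b_1) E_{i_2 i_3}(b_2) \cdots E_{i_k i_1}(b_k)$ where $E_{ij}(b) = E_{ij} \otimes b$. Then $[T_k(b_1,\dots,b_k), E_{j_1 j_2} \otimes 1] = 0$ for all $j_1, j_2$, i.e. $T_k(b_1,\dots,b_k)$ commutes with $\mathfrak{gl}_N \cong \mathfrak{gl}_N \otimes 1$. -/

import Mathlib

open TensorProduct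

attribute [local instance 100] LieRing.ofAssociativeRing

noncomputable section

variable (A : Type*) [CommRing A] [Algebra ℂ A]

/-- The current Lie algebra `gl_N ⊗ A` is a Lie algebra over `ℂ`. -/
instance currentGl.instLieAlgebra (N : ℕ) :
    LieAlgebra ℂ (A ⊗[ℂ] Matrix (Fin N) (Fin N) ℂ) where
  lie_smul c x y := by
    rw [← algebraMap_smul A c y, ← algebraMap_smul A c ⁅x, y⁆]
    exact LieAlgebra.lie_smul (algebraMap ℂ A c) x y

/-- The Gelfand-type invariant
`T_k(b₁,…,b_k) = ∑ E_{i₁i₂}(b₁) E_{i₂i₃}(b₂) ⋯ E_{i_k i₁}(b_k)`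
in `U(gl_N ⊗ A)`; here `E_{ij}(b) = E_{ij} ⊗ b`, and the cyclic index
structure is encoded by addition in `Fin k`. -/
def glT (N k : ℕ) (b : Fin k → A) :
    UniversalEnvelopingAlgebra ℂ (A ⊗[ℂ] Matrix (Fin N) (Fin N) ℂ) :=
  ∑ i : Fin k → Fin N,
    (List.ofFn (fun r : Fin k =>
      UniversalEnvelopingAlgebra.ι ℂ
        (b r ⊗ₜ[ℂ] Matrix.single (i r) (i ⟨((r : ℕ) + 1) % k, Nat.mod_lt _ r.pos⟩) (1 : ℂ)))).prod

section auxHelpers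

variable {R : Type*} [Ring R]

lemma glTAux.update_comp_succ {β : Type*} {n : ℕ} (f : Fin (n+1) → β) (r : Fin n) (y : β) :
    (fun i : Fin n => Function.update f r.succ y i.succ) = Function.update (fun i => f i.succ) r y := by
  funext i
  by_cases h : i = r
  · subst h; simp
  · rw [Function.update_of_ne (fun hc => h (Fin.succ_injective _ hc)), Function.update_of_ne h]

lemma glTAux.ofFn_update_sub : ∀ {k : ℕ} (f : Fin k → R) (r : Fin k) (y z : R),
    (List.ofFn (Function.update f r (y - z))).prod
      = (List.ofFn (Function.update f r y)).prod - (List.ofFn (Function.update f r z)).prod := by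
  intro k
  induction k with
  | zero => intro f r; exact r.elim0
  | succ n ih =>
    intro f r y z
    refine Fin.cases ?_ ?_ r
    · simp [List.ofFn_succ, Function.update_of_ne (Fin.succ_ne_zero _), sub_mul]
    · intro r'
      rw [List.ofFn_succ, List.ofFn_succ, List.ofFn_succ, List.prod_cons, List.prod_cons,
        List.prod_cons, glTAux.update_comp_succ, glTAux.update_comp_succ, glTAux.update_comp_succ,
        Function.update_of_ne (Fin.succ_ne_zero _).symm, Function.update_of_ne (Fin.succ_ne_zero _).symm,
        Function.update_of_ne (Fin.succ_ne_zero _).symm, ih, mul_sub]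

lemma glTAux.ofFn_update_zero {k : ℕ} (f : Fin k → R) (r : Fin k) :
    (List.ofFn (Function.update f r (0 : R))).prod = 0 := by
  have h := glTAux.ofFn_update_sub f r (1 : R) 1
  simpa using h

lemma glTAux.comm_ofFn_prod : ∀ {k : ℕ} (x : R) (f : Fin k → R),
    x * (List.ofFn f).prod - (List.ofFn f).prod * x
      = ∑ r : Fin k, (List.ofFn (Function.update f r (x * f r - f r * x))).prod := by
  intro k
  induction k with
  | zero => intro x f; simp
  | succ n ih =>
    intro x f
    rw [Fin.sum_univ_succ]
    have h0 : (List.ofFn (Function.update f 0 (x * f 0 - f 0 * x))).prod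
        = (x * f 0 - f 0 * x) * (List.ofFn fun i : Fin n => f i.succ).prod := by
      simp [List.ofFn_succ, Function.update_of_ne (Fin.succ_ne_zero _)]
    have hs : ∀ r : Fin n, (List.ofFn (Function.update f r.succ (x * f r.succ - f r.succ * x))).prod
        = f 0 * (List.ofFn (Function.update (fun i : Fin n => f i.succ) r
            (x * f r.succ - f r.succ * x))).prod := by
      intro r
      rw [List.ofFn_succ, List.prod_cons, glTAux.update_comp_succ,
        Function.update_of_ne (Fin.succ_ne_zero _).symm]
    rw [h0]
    simp only [hs]
    rw [← Finset.mul_sum, ← ih x (fun i => f i.succ)]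
    rw [List.ofFn_succ, List.prod_cons]
    noncomm_ring

lemma glTAux.fin_mk_succ {k : ℕ} [NeZero k] (r : Fin k) :
    (⟨((r : ℕ) + 1) % k, Nat.mod_lt _ r.pos⟩ : Fin k) = r + 1 := by
  ext
  simp [Fin.val_add, Fin.val_one', Nat.add_mod, Nat.mod_mod_of_dvd]

end auxHelpers

/-- `T_k(b₁,…,b_k)` commutes with `gl_N ≅ gl_N ⊗ 1` inside `U(gl_N ⊗ A)`. -/
theorem glT_commutes_with_gl (N k : ℕ) (hk : 1 ≤ k) (b : Fin k → A)
    (j₁ j₂ : Fin N) :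
    glT A N k b *
        UniversalEnvelopingAlgebra.ι ℂ
          ((1 : A) ⊗ₜ[ℂ] Matrix.single j₁ j₂ (1 : ℂ)) -
      UniversalEnvelopingAlgebra.ι ℂ
          ((1 : A) ⊗ₜ[ℂ] Matrix.single j₁ j₂ (1 : ℂ)) * glT A N k b = 0 := by
  haveI : NeZero k := ⟨by omega⟩
  set ι := UniversalEnvelopingAlgebra.ι ℂ (L := A ⊗[ℂ] Matrix (Fin N) (Fin N) ℂ) with hι
  set x₀ : UniversalEnvelopingAlgebra ℂ (A ⊗[ℂ] Matrix (Fin N) (Fin N) ℂ) :=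
    ι ((1 : A) ⊗ₜ[ℂ] Matrix.single j₁ j₂ (1 : ℂ)) with hx₀
  -- factor functions
  set g : (Fin k → Fin N) → Fin k → UniversalEnvelopingAlgebra ℂ (A ⊗[ℂ] Matrix (Fin N) (Fin N) ℂ) :=
    fun i r => ι (b r ⊗ₜ[ℂ] Matrix.single (i r) (i (r + 1)) (1 : ℂ)) with hg
  have hglT : glT A N k b = ∑ i : Fin k → Fin N, (List.ofFn (g i)).prod := by
    unfold glT
    refine Finset.sum_congr rfl fun i _ => congrArg List.prod (congrArg List.ofFn ?_)
    funext r
    simp only [hg]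
    rw [glTAux.fin_mk_succ]
  rw [sub_eq_zero]
  rw [eq_comm, ← sub_eq_zero]
  -- the commutator as a double sum
  rw [hglT, Finset.mul_sum, Finset.sum_mul, ← Finset.sum_sub_distrib]
  simp only [glTAux.comm_ofFn_prod x₀]
  -- compute the elementary brackets
  set P : (Fin k → Fin N) → Fin k → UniversalEnvelopingAlgebra ℂ (A ⊗[ℂ] Matrix (Fin N) (Fin N) ℂ) :=
    fun i r => if i r = j₂ then ι (b r ⊗ₜ[ℂ] Matrix.single j₁ (i (r + 1)) (1 : ℂ)) else 0 with hP
  set Q : (Fin k → Fin N) → Fin k → UniversalEnvelopingAlgebra ℂ (A ⊗[ℂ] Matrix (Fin N) (Fin N) ℂ) :=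
    fun i r => if i (r + 1) = j₁ then ι (b r ⊗ₜ[ℂ] Matrix.single (i r) j₂ (1 : ℂ)) else 0 with hQ
  have hbr : ∀ (i : Fin k → Fin N) (r : Fin k),
      x₀ * g i r - g i r * x₀ = P i r - Q i r := by
    intro i r
    rw [hx₀, hg, ← Ring.lie_def, ← LieHom.map_lie, LieAlgebra.ExtendScalars.bracket_tmul, one_mul,
      Ring.lie_def]
    have e1 : Matrix.single j₁ j₂ (1:ℂ) * Matrix.single (i r) (i (r+1)) 1
        = if i r = j₂ then Matrix.single j₁ (i (r+1)) (1:ℂ) else 0 := by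
      by_cases h2 : i r = j₂
      · rw [if_pos h2, ← h2, Matrix.single_mul_single_same, one_mul]
      · rw [if_neg h2]; exact Matrix.single_mul_single_of_ne (h := Ne.symm h2) (d := 1) ..
    have e2 : Matrix.single (i r) (i (r+1)) (1:ℂ) * Matrix.single j₁ j₂ 1
        = if i (r+1) = j₁ then Matrix.single (i r) j₂ (1:ℂ) else 0 := by
      by_cases h1 : i (r+1) = j₁
      · rw [if_pos h1, h1, Matrix.single_mul_single_same, one_mul]
      · rw [if_neg h1]; exact Matrix.single_mul_single_of_ne (h := h1) (d := 1) ..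
    rw [e1, e2, tmul_sub, map_sub, hP, hQ]
    by_cases h2 : i r = j₂ <;> by_cases h1 : i (r+1) = j₁ <;>
      simp [h2, h1, TensorProduct.tmul_zero]
  simp only [hbr]
  simp only [glTAux.ofFn_update_sub]
  simp only [Finset.sum_sub_distrib]
  rw [sub_eq_zero]
  -- the swap-at-coordinate-`r` involution
  set upd : Fin k → (Fin k → Fin N) → (Fin k → Fin N) :=
    fun r i => Function.update i r (Equiv.swap j₁ j₂ (i r)) with hupd
  have hinv : ∀ r : Fin k, Function.Involutive (upd r) := by
    intro r i
    funext s
    by_cases hs : s = r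
    · subst hs
      simp [hupd, Function.update_self, Equiv.swap_apply_self]
    · simp [hupd, Function.update_of_ne hs]
  have hr1 : ∀ r : Fin k, (r - 1) + 1 = r := fun r => sub_add_cancel r 1
  have key : ∀ (i : Fin k → Fin N) (r : Fin k),
      (List.ofFn (Function.update (g i) r (P i r))).prod
        = (List.ofFn (Function.update (g (upd r i)) (r - 1) (Q (upd r i) (r - 1)))).prod := by
    intro i r
    by_cases h2 : i r = j₂
    · -- the two updated factor-functions agree
      have hupr : upd r i r = j₁ := by
        simp [hupd, Function.update_self, h2, Equiv.swap_apply_right]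
      have hPval : P i r = ι (b r ⊗ₜ[ℂ] Matrix.single j₁ (i (r + 1)) (1 : ℂ)) := by
        simp only [hP]; rw [if_pos h2]
      have hQval : Q (upd r i) (r - 1)
          = ι (b (r - 1) ⊗ₜ[ℂ] Matrix.single ((upd r i) (r - 1)) j₂ (1 : ℂ)) := by
        simp only [hQ]
        rw [if_pos (by rw [hr1 r, hupr])]
      refine congrArg List.prod (congrArg List.ofFn ?_)
      funext s
      rw [hPval, hQval, Function.update_apply, Function.update_apply]
      by_cases hs : s = r <;> by_cases hs' : s = r - 1
      · rw [if_pos hs, if_pos hs']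
        have hrr : r - 1 = r := by rw [← hs', hs]
        have hr1r : r + 1 = r := by
          conv_lhs => rw [← hrr]
          rw [hr1 r]
        rw [hrr, hupr, hr1r, h2]
      · rw [if_pos hs, if_neg hs']
        have hner : r + 1 ≠ r := by
          intro hc
          exact hs' (hs.trans (eq_sub_iff_add_eq.mpr hc))
        rw [hs]
        simp only [hg, hupd]
        rw [Function.update_self, h2, Equiv.swap_apply_right,
          Function.update_of_ne hner]
      · rw [if_neg hs, if_pos hs']
        have hrne : r - 1 ≠ r := fun hc => hs (hs'.trans hc)
        rw [hs']
        simp only [hg, hupd]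
        rw [Function.update_of_ne hrne, hr1 r, h2]
      · rw [if_neg hs, if_neg hs']
        have hs1 : s + 1 ≠ r := fun hc => hs' (eq_sub_iff_add_eq.mpr hc)
        simp only [hg, hupd]
        rw [Function.update_of_ne hs, Function.update_of_ne hs1]
    · have hPz : P i r = 0 := by simp only [hP]; rw [if_neg h2]
      have hQz : Q (upd r i) (r - 1) = 0 := by
        simp only [hQ]
        rw [if_neg]
        rw [hr1 r]
        simp only [hupd, Function.update_self]
        intro hc
        exact h2 ((Equiv.swap j₁ j₂).injective (by rw [hc, Equiv.swap_apply_right]))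
      rw [hPz, hQz, glTAux.ofFn_update_zero, glTAux.ofFn_update_zero]
  calc ∑ i : Fin k → Fin N, ∑ r : Fin k, (List.ofFn (Function.update (g i) r (P i r))).prod
      = ∑ r : Fin k, ∑ i : Fin k → Fin N, (List.ofFn (Function.update (g i) r (P i r))).prod :=
        Finset.sum_comm
    _ = ∑ r : Fin k, ∑ i : Fin k → Fin N,
          (List.ofFn (Function.update (g i) (r - 1) (Q i (r - 1)))).prod := by
        refine Finset.sum_congr rfl fun r _ => ?_
        exact Fintype.sum_bijective (upd r) ((hinv r).bijective) _ _ (fun i => key i r)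
    _ = ∑ r : Fin k, ∑ i : Fin k → Fin N,
          (List.ofFn (Function.update (g i) r (Q i r))).prod := by
        refine Fintype.sum_bijective (fun r => r - 1) (Equiv.subRight (1 : Fin k)).bijective _ _
          (fun r => rfl)
    _ = ∑ i : Fin k → Fin N, ∑ r : Fin k, (List.ofFn (Function.update (g i) r (Q i r))).prod :=
        Finset.sum_comm
end
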